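/- Let G be an infinite abelian group. Then G ↛ (2,3,4,…)^FS: there exists a colouring c : G → ℕ such that for every n ∈ ℕ there is no subset X ⊆ G with |X| = n + 2 for which c takes the constant value n on FS(X). -/

import Mathlib

open scoped Classical

namespace Stmt12Aux

variable {G : Type*} [AddCommGroup G]

/-- `ℤ`-independence of a subset of an abelian group. -/
def Ind (I : Set G) : Prop :=
  ∀ f : G →₀ ℤ, ↑f.support ⊆ I → (f.sum fun g z => z • g) = 0 → ∀ g : G, f g • g = 0

/-- a chosen representation of an element of the span as a finsupp combination -/
noncomputable def rep (I : Set G) (x : G) : G →₀ ℤ :=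
  if h : x ∈ Submodule.span ℤ I then (Submodule.mem_span_set.mp h).choose else 0

lemma rep_support (I : Set G) {x : G} (hx : x ∈ Submodule.span ℤ I) :
    ↑(rep I x).support ⊆ I := by
  rw [rep, dif_pos hx]; exact (Submodule.mem_span_set.mp hx).choose_spec.1

lemma rep_sum (I : Set G) {x : G} (hx : x ∈ Submodule.span ℤ I) :
    ((rep I x).sum fun g z => z • g) = x := by
  rw [rep, dif_pos hx]; exact (Submodule.mem_span_set.mp hx).choose_spec.2

/-- coordinate value of `x` at `i` -/
noncomputable def cv (I : Set G) (x i : G) : G := rep I x i • i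

lemma cv_mem_range (I : Set G) (x i : G) :
    cv I x i ∈ Set.range (fun z : ℤ => z • i) := ⟨rep I x i, rfl⟩

/-- support of `x` -/
noncomputable def Ds (I : Set G) (x : G) : Finset G :=
  (rep I x).support.filter (fun i => cv I x i ≠ 0)

lemma mem_Ds {I : Set G} {x i : G} : i ∈ Ds I x ↔ cv I x i ≠ 0 := by
  constructor
  · exact fun h => (Finset.mem_filter.mp h).2
  · intro h
    refine Finset.mem_filter.mpr ⟨Finsupp.mem_support_iff.mpr ?_, h⟩
    intro h0
    exact h (by simp [cv, h0])

lemma cv_unique {I : Set G} (hInd : Ind I) {x : G} (c : G →₀ ℤ) (hs : ↑c.support ⊆ I)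
    (hc : (c.sum fun g z => z • g) = x) (hx : x ∈ Submodule.span ℤ I) (i : G) :
    c i • i = cv I x i := by
  have hsub : ((c - rep I x).sum fun g z => z • g) = 0 := by
    rw [Finsupp.sum_sub_index (fun a b₁ b₂ => sub_smul b₁ b₂ a), hc, rep_sum I hx, sub_self]
  have hsupp : ↑(c - rep I x).support ⊆ I := by
    intro a ha
    rcases Finset.mem_union.mp (Finsupp.support_sub (f := c) (g := rep I x) ha) with h | h
    · exact hs h
    · exact rep_support I hx h
  have h0 := hInd _ hsupp hsub i
  have h2 : c i • i - rep I x i • i = 0 := by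
    rw [← sub_smul]; simpa using h0
  have h3 := sub_eq_zero.mp h2
  simpa [cv] using h3

lemma cv_add {I : Set G} (hInd : Ind I) {x y : G} (hx : x ∈ Submodule.span ℤ I)
    (hy : y ∈ Submodule.span ℤ I) (i : G) :
    cv I (x + y) i = cv I x i + cv I y i := by
  have hs : ↑(rep I x + rep I y).support ⊆ I := by
    intro a ha
    rcases Finset.mem_union.mp (Finsupp.support_add ha) with h | h
    · exact rep_support I hx h
    · exact rep_support I hy h
  have hsum : ((rep I x + rep I y).sum fun g z => z • g) = x + y := by
    rw [Finsupp.sum_add_index' (fun a => zero_smul ℤ a) (fun a b1 b2 => add_smul b1 b2 a),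
      rep_sum I hx, rep_sum I hy]
  have h := cv_unique hInd _ hs hsum (Submodule.add_mem _ hx hy) i
  rw [← h]
  simp [cv, Finsupp.add_apply, add_smul]

lemma cv_zero {I : Set G} (hInd : Ind I) (i : G) : cv I (0 : G) i = 0 := by
  have h := cv_unique hInd 0 (by simp) (by simp) (Submodule.zero_mem _) i
  simpa using h.symm

lemma cv_nsmul {I : Set G} (hInd : Ind I) {x : G} (hx : x ∈ Submodule.span ℤ I) (i : G) :
    ∀ κ : ℕ, cv I (κ • x) i = κ • cv I x i := by
  intro κ
  induction κ with
  | zero => simpa using cv_zero hInd i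
  | succ κ ih =>
    have hκx : κ • x ∈ Submodule.span ℤ I := by
      rw [← natCast_zsmul]; exact Submodule.smul_mem _ _ hx
    rw [succ_nsmul, cv_add hInd hκx hx, ih, succ_nsmul]

lemma sum_Ds {I : Set G} {x : G} (hx : x ∈ Submodule.span ℤ I) :
    ∑ i ∈ Ds I x, cv I x i = x := by
  rw [Ds, Finset.sum_filter_ne_zero]
  have h := rep_sum I hx
  rw [Finsupp.sum] at h
  simpa [cv] using h

/-- the least positive multiplier -/
noncomputable def mg (I : Set G) (g : G) : ℕ :=
  if h : ∃ k : ℕ, 0 < k ∧ k • g ∈ Submodule.span ℤ I ∧ k • g ≠ 0 then Nat.find h else 0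

lemma mg_spec {I : Set G} {g : G}
    (h : ∃ k : ℕ, 0 < k ∧ k • g ∈ Submodule.span ℤ I ∧ k • g ≠ 0) :
    0 < mg I g ∧ mg I g • g ∈ Submodule.span ℤ I ∧ mg I g • g ≠ 0 := by
  rw [mg, dif_pos h]; exact Nat.find_spec h

/-- encoding of the cyclic group generated by `i` -/
noncomputable def eF (i : G) : G → ℕ := fun g =>
  if h : g ∈ Set.range (fun z : ℤ => z • i) then
    (Set.countable_iff_exists_injective.mp (Set.countable_range _)).choose ⟨g, h⟩
  else 0

lemma eF_injOn (i : G) : Set.InjOn (eF i) (Set.range fun z : ℤ => z • i) := by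
  intro a ha b hb hab
  simp only [eF] at hab
  rw [dif_pos ha, dif_pos hb] at hab
  have h := (Set.countable_iff_exists_injective.mp
    (Set.countable_range (fun z : ℤ => z • i))).choose_spec hab
  exact Subtype.ext_iff.mp h

/-- the multiset of codes -/
noncomputable def Mg (I : Set G) (g : G) : Multiset ℕ :=
  (Ds I (mg I g • g)).val.map fun i => eF i (cv I (mg I g • g) i)

/-- size bound -/
def BB (r : ℕ) : ℕ := (r + 1) ^ (2 * r) * r

/-- the colouring -/
noncomputable def col (I : Set G) (g : G) : ℕ :=
  if g = 0 then 0 else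
    Nat.pair (Encodable.encode (mg I g, Mg I g)) (BB (Multiset.card (Mg I g))) + 1

lemma col_eq_zero {I : Set G} {g : G} : col I g = 0 ↔ g = 0 := by
  constructor
  · intro h
    by_contra hg
    rw [col, if_neg hg] at h
    omega
  · intro h; rw [col, if_pos h]

end Stmt12Aux

open Stmt12Aux

/-- `FS X` is the set of finite sums (with no repetitions) of elements of `X`. -/
def FS {G : Type*} [AddCommMonoid G] (X : Set G) : Set G :=
  {g | ∃ F : Finset G, F.Nonempty ∧ ↑F ⊆ X ∧ g = ∑ x ∈ F, x}

/-- Every infinite abelian group `G` satisfies `G ↛ (2,3,4,…)^FS`: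
there is a colouring `c : G → ℕ` such that for every `n`, no `X ⊆ G` of cardinality
`n + 2` has `FS(X)` monochromatic in colour `n`. -/
theorem stmt_12 (G : Type*) [AddCommGroup G] [Infinite G] :
    ∃ c : G → ℕ, ∀ n : ℕ, ¬ ∃ X : Set G, X.ncard = n + 2 ∧ ∀ s ∈ FS X, c s = n := by
  classical
  -- a maximal independent set
  have hzorn : ∃ I, (∅ : Set G) ⊆ I ∧ Maximal (fun J => J ∈ {J : Set G | Ind J}) I := by
    apply zorn_subset_nonempty
    · intro c hc hchain hne
      refine ⟨⋃₀ c, ?_, fun s hs => Set.subset_sUnion_of_mem hs⟩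
      have key : ∀ s : Finset G, ↑s ⊆ ⋃₀ c → ∃ t ∈ c, ↑s ⊆ t := by
        intro s
        induction s using Finset.induction_on with
        | empty =>
          intro _
          obtain ⟨t, ht⟩ := hne
          exact ⟨t, ht, by simp⟩
        | @insert a s ha ih =>
          intro hsub
          have hssub : ↑s ⊆ ⋃₀ c := by
            refine subset_trans ?_ hsub
            simp only [Finset.coe_insert]
            exact Set.subset_insert _ _
          obtain ⟨t, htc, hts⟩ := ih hssub
          have hamem : a ∈ ⋃₀ c := hsub (by simp)
          obtain ⟨u, huc, hau⟩ := Set.mem_sUnion.mp hamem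
          rcases hchain.total htc huc with h | h
          · refine ⟨u, huc, ?_⟩
            simp only [Finset.coe_insert]
            exact Set.insert_subset hau (hts.trans h)
          · refine ⟨t, htc, ?_⟩
            simp only [Finset.coe_insert]
            exact Set.insert_subset (h hau) hts
      intro f hs hsum g
      obtain ⟨t, htc, hts⟩ := key f.support hs
      exact hc htc f hts hsum g
    · show Ind (∅ : Set G)
      intro f hs hsum g
      have : f = 0 := Finsupp.support_eq_empty.mp (by simpa using hs)
      simp [this]
  obtain ⟨I, -, hIm⟩ := hzorn
  have hInd : Ind I := hIm.1
  have mex : ∀ g : G, g ≠ 0 → ∃ k : ℕ, 0 < k ∧ k • g ∈ Submodule.span ℤ I ∧ k • g ≠ 0 := by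
    intro g hg
    by_contra hcon
    push_neg at hcon
    have hgI : g ∉ I := by
      intro hgI
      have h1 : (1 : ℕ) • g ∈ Submodule.span ℤ I := by
        simpa using Submodule.subset_span hgI
      exact hg (by simpa using hcon 1 one_pos h1)
    have hzsmul : ∀ z : ℤ, z • g ∈ Submodule.span ℤ I → z • g = 0 := by
      intro z hz
      rcases eq_or_ne z 0 with rfl | hz0
      · simp
      · have hpos : 0 < z.natAbs := Int.natAbs_pos.mpr hz0
        rcases Int.natAbs_eq z with he | he
        · have hmem : (z.natAbs : ℕ) • g ∈ Submodule.span ℤ I := by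
            rw [← natCast_zsmul, ← he]; exact hz
          have h0 := hcon _ hpos hmem
          rw [he, natCast_zsmul]; exact h0
        · have hmem : (z.natAbs : ℕ) • g ∈ Submodule.span ℤ I := by
            rw [← natCast_zsmul]
            have h2 : ((z.natAbs : ℤ)) • g = -(z • g) := by
              rw [he]; simp
            rw [h2]; exact Submodule.neg_mem _ hz
          have h0 := hcon _ hpos hmem
          have h3 : z • g = -(((z.natAbs : ℤ)) • g) := by rw [he]; simp
          rw [h3, natCast_zsmul, h0, neg_zero]
    have hind' : Ind (insert g I) := by
      intro f hs hsum x
      have hsum2 : f g • g + ((f.erase g).sum fun i z => z • i) = 0 := by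
        calc f g • g + ((f.erase g).sum fun i z => z • i)
            = ((Finsupp.single g (f g)).sum fun i z => z • i)
              + ((f.erase g).sum fun i z => z • i) := by
              rw [Finsupp.sum_single_index (zero_smul ℤ g)]
          _ = ((Finsupp.single g (f g) + f.erase g).sum fun i z => z • i) := by
              rw [Finsupp.sum_add_index' (fun a => zero_smul ℤ a) (fun a b1 b2 => add_smul b1 b2 a)]
          _ = 0 := by rw [Finsupp.single_add_erase g f]; exact hsum
      have heraseI : ↑(f.erase g).support ⊆ I := by
        intro a ha
        have ha' : a ∈ f.support.erase g := by
          rw [← Finsupp.support_erase (a := g) (f := f)]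
          exact ha
        have h1 : a ≠ g := Finset.ne_of_mem_erase ha'
        have h2 : a ∈ (insert g I : Set G) := hs (Finset.mem_of_mem_erase ha')
        rcases Set.mem_insert_iff.mp h2 with h2 | h2
        · exact absurd h2 h1
        · exact h2
      have heraseMem : ((f.erase g).sum fun i z => z • i) ∈ Submodule.span ℤ I :=
        Submodule.mem_span_set.mpr ⟨f.erase g, heraseI, rfl⟩
      have hfgmem : f g • g ∈ Submodule.span ℤ I := by
        have h4 : f g • g = -((f.erase g).sum fun i z => z • i) :=
          eq_neg_of_add_eq_zero_left hsum2
        rw [h4]; exact Submodule.neg_mem _ heraseMem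
      have hfg0 : f g • g = 0 := hzsmul _ hfgmem
      have herase0 : ((f.erase g).sum fun i z => z • i) = 0 := by
        rw [hfg0, zero_add] at hsum2; exact hsum2
      have hrest := hInd (f.erase g) heraseI herase0
      rcases eq_or_ne x g with rfl | hxg
      · exact hfg0
      · have h5 := hrest x
        rwa [Finsupp.erase_ne hxg] at h5
    have hsub : insert g I ⊆ I := hIm.2 hind' (Set.subset_insert g I)
    exact hgI (hsub (Set.mem_insert g I))
  -- the colouring works
  refine ⟨col I, ?_⟩
  rintro n ⟨X, hXcard, hmono⟩
  have hXfin : X.Finite := by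
    by_contra h
    rw [Set.Infinite.ncard h] at hXcard
    omega
  set Xf : Finset G := hXfin.toFinset with hXfdef
  have hXfcard : Xf.card = n + 2 := by
    rw [Set.ncard_eq_toFinset_card X hXfin] at hXcard; exact hXcard
  have hXfmem : ∀ a : G, a ∈ Xf ↔ a ∈ X := fun a => hXfin.mem_toFinset
  have hmemFS : ∀ x ∈ X, x ∈ FS X := by
    intro x hx
    exact ⟨{x}, Finset.singleton_nonempty x, by simpa using hx, by simp⟩
  have hsumFS : ∀ F : Finset G, F.Nonempty → F ⊆ Xf → (∑ a ∈ F, a) ∈ FS X := by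
    intro F h1 h2
    exact ⟨F, h1, fun a ha => (hXfmem a).mp (h2 ha), rfl⟩
  obtain ⟨a₀, ha₀f, b₀, hb₀f, hab₀⟩ := Finset.one_lt_card.mp (by omega : 1 < Xf.card)
  have ha₀X : a₀ ∈ X := (hXfmem _).mp ha₀f
  have hb₀X : b₀ ∈ X := (hXfmem _).mp hb₀f
  have hFSne : ∀ s ∈ FS X, s ≠ 0 := by
    intro s hs hs0
    have h1 := hmono s hs
    rw [hs0, col_eq_zero.mpr rfl] at h1
    have h2 : a₀ = 0 := col_eq_zero.mp (by rw [hmono a₀ (hmemFS _ ha₀X), ← h1])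
    have h3 : b₀ = 0 := col_eq_zero.mp (by rw [hmono b₀ (hmemFS _ hb₀X), ← h1])
    exact hab₀ (h2.trans h3.symm)
  set m : ℕ := mg I a₀ with hm
  set M : Multiset ℕ := Mg I a₀ with hM
  set r : ℕ := Multiset.card M with hrdef
  have hkey : ∀ s ∈ FS X, mg I s = m ∧ Mg I s = M := by
    intro s hs
    have hsne := hFSne s hs
    have ha₀ne := hFSne a₀ (hmemFS _ ha₀X)
    have h1 : col I s = col I a₀ := by rw [hmono s hs, hmono a₀ (hmemFS _ ha₀X)]
    rw [col, if_neg hsne, col, if_neg ha₀ne] at h1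
    have h1' := Nat.add_right_cancel h1
    have h2 := Nat.pair_eq_pair.mp h1'
    have h3 := Encodable.encode_injective h2.1
    exact ⟨congrArg Prod.fst h3, congrArg Prod.snd h3⟩
  have hnge : BB r < n := by
    have h := hmono a₀ (hmemFS _ ha₀X)
    rw [col, if_neg (hFSne a₀ (hmemFS _ ha₀X))] at h
    have h2 := Nat.right_le_pair (Encodable.encode (mg I a₀, Mg I a₀))
      (BB (Multiset.card (Mg I a₀)))
    simp only [← hm, ← hM, ← hrdef] at h h2 ⊢
    omega
  have hSfact : ∀ s ∈ FS X, m • s ∈ Submodule.span ℤ I ∧ m • s ≠ 0 := by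
    intro s hs
    have h := mg_spec (mex s (hFSne s hs))
    rw [(hkey s hs).1] at h
    exact ⟨h.2.1, h.2.2⟩
  have hMfact : ∀ s ∈ FS X,
      ((Ds I (m • s)).val.map fun i => eF i (cv I (m • s) i)) = M := by
    intro s hs
    have h := (hkey s hs).2
    rw [Mg, (hkey s hs).1] at h
    exact h
  have hDscard : ∀ s ∈ FS X, (Ds I (m • s)).card = r := by
    intro s hs
    have h := congrArg Multiset.card (hMfact s hs)
    rwa [Multiset.card_map, Finset.card_val] at h
  have hr1 : 1 ≤ r := by
    by_contra h
    have hr0 : r = 0 := by omega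
    have h1 := hDscard a₀ (hmemFS _ ha₀X)
    have h2 : Ds I (m • a₀) = ∅ := Finset.card_eq_zero.mp (by rw [h1, hr0])
    have h3 := sum_Ds (hSfact a₀ (hmemFS _ ha₀X)).1
    rw [h2] at h3
    exact (hSfact a₀ (hmemFS _ ha₀X)).2 (by simpa using h3.symm)
  have hmS : ∀ a ∈ Xf, m • a ∈ Submodule.span ℤ I :=
    fun a ha => (hSfact a (hmemFS _ ((hXfmem a).mp ha))).1
  have hσS : ∀ F : Finset G, F ⊆ Xf → (∑ a ∈ F, m • a) ∈ Submodule.span ℤ I :=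
    fun F hF => Submodule.sum_mem _ (fun a ha => hmS a (hF ha))
  have cv_sigma : ∀ F : Finset G, F ⊆ Xf → ∀ i : G,
      cv I (∑ a ∈ F, m • a) i = ∑ a ∈ F, cv I (m • a) i := by
    intro F
    induction F using Finset.cons_induction with
    | empty => intro _ i; simpa using cv_zero hInd i
    | cons a F' ha ih =>
      intro hF i
      have haXf : a ∈ Xf := hF (Finset.mem_cons_self a F')
      have hF' : F' ⊆ Xf := fun x hx => hF (Finset.mem_cons.mpr (Or.inr hx))
      rw [Finset.sum_cons, Finset.sum_cons, cv_add hInd (hmS a haXf) (hσS F' hF'), ih hF' i]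
  set U : Finset G := Xf.biUnion (fun a => Ds I (m • a)) with hU
  have hDs_sub : ∀ F : Finset G, F ⊆ Xf → Ds I (∑ a ∈ F, m • a) ⊆ U := by
    intro F hF i hi
    have hcv : cv I (∑ a ∈ F, m • a) i ≠ 0 := mem_Ds.mp hi
    rw [cv_sigma F hF i] at hcv
    obtain ⟨a, haF, hane⟩ := Finset.exists_ne_zero_of_sum_ne_zero hcv
    exact Finset.mem_biUnion.mpr ⟨a, hF haF, mem_Ds.mpr hane⟩
  have hsigma_smul : ∀ F : Finset G, (∑ a ∈ F, m • a) = m • ∑ a ∈ F, a :=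
    fun F => (Finset.smul_sum).symm
  have hDsσcard : ∀ F : Finset G, F ⊆ Xf → F.Nonempty → (Ds I (∑ a ∈ F, m • a)).card = r := by
    intro F hF hne
    rw [hsigma_smul F]
    exact hDscard _ (hsumFS F hne hF)
  -- Step A : the union of supports is small
  have stepA : U.card ≤ 2 * r := by
    have hk : 1 ≤ Xf.card := by omega
    set P : Finset (Finset G) := Xf.powerset with hP
    have claim1 : ∀ i ∈ U,
        2 ^ (Xf.card - 1) ≤ (P.filter fun F => cv I (∑ a ∈ F, m • a) i ≠ 0).card := by
      intro i hi
      obtain ⟨a₁, ha₁, hia₁⟩ := Finset.mem_biUnion.mp hi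
      have hcv₁ : cv I (m • a₁) i ≠ 0 := mem_Ds.mp hia₁
      have hinj : (P.filter fun F => ¬ (cv I (∑ a ∈ F, m • a) i ≠ 0)).card
          ≤ (P.filter fun F => cv I (∑ a ∈ F, m • a) i ≠ 0).card := by
        apply Finset.card_le_card_of_injOn (fun F => if a₁ ∈ F then F.erase a₁ else insert a₁ F)
        · intro F hF
          simp only [Finset.mem_coe] at hF ⊢
          rw [Finset.mem_filter] at hF
          obtain ⟨hFP, hFq⟩ := hF
          rw [not_not] at hFq
          have hFsub : F ⊆ Xf := Finset.mem_powerset.mp hFP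
          by_cases hmem : a₁ ∈ F
          · rw [if_pos hmem, Finset.mem_filter]
            refine ⟨Finset.mem_powerset.mpr ((Finset.erase_subset _ _).trans hFsub), ?_⟩
            have hs2 : (∑ a ∈ F.erase a₁, m • a) + m • a₁ = ∑ a ∈ F, m • a :=
              Finset.sum_erase_add F _ hmem
            have hcv2 : cv I (∑ a ∈ F.erase a₁, m • a) i + cv I (m • a₁) i
                = cv I (∑ a ∈ F, m • a) i := by
              rw [← cv_add hInd (hσS _ ((Finset.erase_subset _ _).trans hFsub)) (hmS a₁ ha₁), hs2]
            rw [hFq] at hcv2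
            intro h0
            rw [h0, zero_add] at hcv2
            exact hcv₁ hcv2
          · rw [if_neg hmem, Finset.mem_filter]
            refine ⟨Finset.mem_powerset.mpr (Finset.insert_subset ha₁ hFsub), ?_⟩
            have hs2 : (∑ a ∈ insert a₁ F, m • a) = m • a₁ + ∑ a ∈ F, m • a :=
              Finset.sum_insert hmem
            have hcv2 : cv I (∑ a ∈ insert a₁ F, m • a) i
                = cv I (m • a₁) i + cv I (∑ a ∈ F, m • a) i := by
              rw [hs2, cv_add hInd (hmS a₁ ha₁) (hσS F hFsub)]
            rw [hFq, add_zero] at hcv2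
            rw [hcv2]
            exact hcv₁
        · intro F hF F' hF' himg
          simp only at himg
          by_cases h1 : a₁ ∈ F <;> by_cases h2 : a₁ ∈ F'
          · rw [if_pos h1, if_pos h2] at himg
            have h3 := congrArg (insert a₁) himg
            rwa [Finset.insert_erase h1, Finset.insert_erase h2] at h3
          · rw [if_pos h1, if_neg h2] at himg
            exfalso
            have h3 := Finset.mem_insert_self a₁ F'
            rw [← himg] at h3
            exact Finset.notMem_erase a₁ F h3
          · rw [if_neg h1, if_pos h2] at himg
            exfalso
            have h3 := Finset.mem_insert_self a₁ F
            rw [himg] at h3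
            exact Finset.notMem_erase a₁ F' h3
          · rw [if_neg h1, if_neg h2] at himg
            have h3 := congrArg (fun s => Finset.erase s a₁) himg
            rwa [Finset.erase_insert h1, Finset.erase_insert h2] at h3
      have htot := Finset.card_filter_add_card_filter_not
        (s := P) (p := fun F => cv I (∑ a ∈ F, m • a) i ≠ 0)
      have hPcard : P.card = 2 ^ Xf.card := Finset.card_powerset Xf
      have hpow : 2 ^ Xf.card = 2 ^ (Xf.card - 1) * 2 := by
        rw [← pow_succ]; congr 1; omega
      omega
    have claim2 : ∑ i ∈ U, (P.filter fun F => cv I (∑ a ∈ F, m • a) i ≠ 0).card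
        ≤ (P.erase ∅).card * r := by
      have hswap : ∑ i ∈ U, (P.filter fun F => cv I (∑ a ∈ F, m • a) i ≠ 0).card
          = ∑ F ∈ P, (U.filter fun i => cv I (∑ a ∈ F, m • a) i ≠ 0).card := by
        simp_rw [Finset.card_filter]
        exact Finset.sum_comm
      rw [hswap]
      have hsplit : ∑ F ∈ P, (U.filter fun i => cv I (∑ a ∈ F, m • a) i ≠ 0).card
          = ∑ F ∈ P.erase ∅, (U.filter fun i => cv I (∑ a ∈ F, m • a) i ≠ 0).card := by
        rw [← Finset.sum_erase_add P _ (Finset.empty_mem_powerset Xf)]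
        simp [cv_zero hInd]
      rw [hsplit]
      have hbound : ∀ F ∈ P.erase ∅,
          (U.filter fun i => cv I (∑ a ∈ F, m • a) i ≠ 0).card ≤ r := by
        intro F hFe
        have hFP := Finset.mem_of_mem_erase hFe
        have hFne : F.Nonempty := Finset.nonempty_of_ne_empty (Finset.ne_of_mem_erase hFe)
        have hsub2 : (U.filter fun i => cv I (∑ a ∈ F, m • a) i ≠ 0) ⊆ Ds I (∑ a ∈ F, m • a) :=
          fun i hi => mem_Ds.mpr (Finset.mem_filter.mp hi).2
        calc (U.filter fun i => cv I (∑ a ∈ F, m • a) i ≠ 0).card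
            ≤ (Ds I (∑ a ∈ F, m • a)).card := Finset.card_le_card hsub2
          _ = r := hDsσcard F (Finset.mem_powerset.mp hFP) hFne
      calc ∑ F ∈ P.erase ∅, (U.filter fun i => cv I (∑ a ∈ F, m • a) i ≠ 0).card
          ≤ (P.erase ∅).card • r := Finset.sum_le_card_nsmul _ _ r hbound
        _ = (P.erase ∅).card * r := by rw [smul_eq_mul]
    have hsum_ge : U.card * 2 ^ (Xf.card - 1)
        ≤ ∑ i ∈ U, (P.filter fun F => cv I (∑ a ∈ F, m • a) i ≠ 0).card := by
      calc U.card * 2 ^ (Xf.card - 1) = ∑ _i ∈ U, 2 ^ (Xf.card - 1) := by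
            rw [Finset.sum_const, smul_eq_mul]
        _ ≤ _ := Finset.sum_le_sum claim1
    have hq : (P.erase ∅).card + 1 = 2 ^ Xf.card := by
      rw [Finset.card_erase_of_mem (Finset.empty_mem_powerset Xf), Finset.card_powerset]
      have h6 : 1 ≤ 2 ^ Xf.card := Nat.one_le_two_pow
      omega
    have hpow : 2 ^ Xf.card = 2 * 2 ^ (Xf.card - 1) := by
      rw [← pow_succ']; congr 1; omega
    by_contra hcon
    push_neg at hcon
    have h1 : (2 * r + 1) * 2 ^ (Xf.card - 1) ≤ (P.erase ∅).card * r := by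
      calc (2 * r + 1) * 2 ^ (Xf.card - 1) ≤ U.card * 2 ^ (Xf.card - 1) := by
            apply Nat.mul_le_mul_right; omega
        _ ≤ _ := le_trans hsum_ge claim2
    have h2 : ((P.erase ∅).card + 1) * r = (2 * 2 ^ (Xf.card - 1)) * r := by
      rw [hq, hpow]
    have hp1 : 1 ≤ 2 ^ (Xf.card - 1) := Nat.one_le_two_pow
    nlinarith [h1, h2, hp1, hr1]
  -- Step B : few distinct values of m • a
  have stepB : (Xf.image (fun a => m • a)).card ≤ (r + 1) ^ (2 * r) := by
    set T : Finset ℕ := insert 0 (M.toFinset.image (· + 1)) with hT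
    have hTcard : T.card ≤ r + 1 := by
      have h1 := Finset.card_insert_le 0 (M.toFinset.image (· + 1))
      have h2 := Finset.card_image_le (s := M.toFinset) (f := (· + 1))
      have h3 := Multiset.toFinset_card_le M
      rw [hT]
      omega
    have hrecover : ∀ b ∈ Xf.image (fun a => m • a), b = ∑ i ∈ U, cv I b i := by
      intro b hb
      obtain ⟨a, ha, rfl⟩ := Finset.mem_image.mp hb
      have hbS : m • a ∈ Submodule.span ℤ I := hmS a ha
      have h1 : Ds I (m • a) ⊆ U := fun i hi => Finset.mem_biUnion.mpr ⟨a, ha, hi⟩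
      calc m • a = ∑ i ∈ Ds I (m • a), cv I (m • a) i := (sum_Ds hbS).symm
        _ = ∑ i ∈ U, cv I (m • a) i := Finset.sum_subset h1 (fun i _ hni => by
            by_contra hne
            exact hni (mem_Ds.mpr hne))
    have hcode : ∀ b ∈ Xf.image (fun a => m • a), ∀ i : G, cv I b i ≠ 0 → eF i (cv I b i) ∈ M := by
      intro b hb i hne
      obtain ⟨a, ha, rfl⟩ := Finset.mem_image.mp hb
      have hfs : a ∈ FS X := hmemFS _ ((hXfmem a).mp ha)
      have h1 : i ∈ (Ds I (m • a)).val := mem_Ds.mpr hne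
      have h2 := Multiset.mem_map_of_mem (fun i => eF i (cv I (m • a) i)) h1
      rwa [hMfact a hfs] at h2
    set Φ : G → ({x // x ∈ U} → ℕ) :=
      fun b i => if cv I b i.1 = 0 then 0 else eF i.1 (cv I b i.1) + 1 with hΦ
    set tgt : Finset ({x // x ∈ U} → ℕ) :=
      (Finset.univ : Finset ({x // x ∈ U} → {y // y ∈ T})).image
        (fun f => fun i => (f i : ℕ)) with htgt
    have himg : ∀ b ∈ Xf.image (fun a => m • a), Φ b ∈ tgt := by
      intro b hb
      have hval : ∀ i : {x // x ∈ U}, Φ b i ∈ T := by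
        intro i
        by_cases h : cv I b i.1 = 0
        · simp only [hΦ, if_pos h]
          exact Finset.mem_insert_self 0 _
        · simp only [hΦ, if_neg h]
          refine Finset.mem_insert_of_mem (Finset.mem_image.mpr ⟨eF i.1 (cv I b i.1), ?_, rfl⟩)
          exact Multiset.mem_toFinset.mpr (hcode b hb i.1 h)
      refine Finset.mem_image.mpr ⟨fun i => ⟨Φ b i, hval i⟩, Finset.mem_univ _, rfl⟩
    have hinjOn : Set.InjOn Φ ↑(Xf.image (fun a => m • a)) := by
      intro b hb b' hb' heq
      have hbv : ∀ i ∈ U, cv I b i = cv I b' i := by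
        intro i hi
        have h := congrFun heq ⟨i, hi⟩
        simp only [hΦ] at h
        by_cases hz : cv I b i = 0 <;> by_cases hz' : cv I b' i = 0
        · rw [hz, hz']
        · rw [if_pos hz, if_neg hz'] at h; omega
        · rw [if_neg hz, if_pos hz'] at h; omega
        · rw [if_neg hz, if_neg hz'] at h
          have hcd : eF i (cv I b i) = eF i (cv I b' i) := by omega
          exact eF_injOn i (cv_mem_range I b i) (cv_mem_range I b' i) hcd
      rw [hrecover b hb, hrecover b' hb']
      exact Finset.sum_congr rfl hbv
    calc (Xf.image (fun a => m • a)).card ≤ tgt.card :=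
          Finset.card_le_card_of_injOn Φ himg hinjOn
      _ ≤ (Finset.univ : Finset ({x // x ∈ U} → {y // y ∈ T})).card := Finset.card_image_le
      _ = Fintype.card ({x // x ∈ U} → {y // y ∈ T}) := Finset.card_univ
      _ = Fintype.card {y // y ∈ T} ^ Fintype.card {x // x ∈ U} := Fintype.card_fun
      _ = T.card ^ U.card := by rw [Fintype.card_coe, Fintype.card_coe]
      _ ≤ (r + 1) ^ U.card := Nat.pow_le_pow_left hTcard _
      _ ≤ (r + 1) ^ (2 * r) := Nat.pow_le_pow_right (by omega) stepA
  -- Step C : fibers are small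
  have stepC : ∀ b ∈ Xf.image (fun a => m • a),
      (Xf.filter fun a => m • a = b).card ≤ r := by
    intro b hb
    obtain ⟨a₁, ha₁, rfl⟩ := Finset.mem_image.mp hb
    set K := (Xf.filter fun a => m • a = m • a₁).card with hK
    have ha₁FS : a₁ ∈ FS X := hmemFS _ ((hXfmem a₁).mp ha₁)
    have hbS : m • a₁ ∈ Submodule.span ℤ I := (hSfact a₁ ha₁FS).1
    obtain ⟨istar, histar⟩ : (Ds I (m • a₁)).Nonempty := by
      rw [← Finset.card_pos, hDscard a₁ ha₁FS]; omega
    have hv : cv I (m • a₁) istar ≠ 0 := mem_Ds.mp histar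
    have hfact : ∀ κ : ℕ, 1 ≤ κ → κ ≤ K →
        κ • cv I (m • a₁) istar ≠ 0 ∧ eF istar (κ • cv I (m • a₁) istar) ∈ M := by
      intro κ h1 h2
      obtain ⟨F, hFsub, hFcard⟩ := Finset.exists_subset_card_eq
        (show κ ≤ (Xf.filter fun a => m • a = m • a₁).card from hK ▸ h2)
      have hFX : F ⊆ Xf := hFsub.trans (Finset.filter_subset _ _)
      have hFne : F.Nonempty := Finset.card_pos.mp (by omega)
      have hsFS : (∑ a ∈ F, a) ∈ FS X := hsumFS F hFne hFX
      have hms : m • (∑ a ∈ F, a) = κ • (m • a₁) := by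
        rw [Finset.smul_sum]
        have hc : ∀ a ∈ F, m • a = m • a₁ := fun a ha => (Finset.mem_filter.mp (hFsub ha)).2
        rw [Finset.sum_congr rfl hc, Finset.sum_const, hFcard]
      have hDseq : Ds I (κ • (m • a₁)) = Ds I (m • a₁) := by
        apply Finset.eq_of_subset_of_card_le
        · intro i hi
          have h := mem_Ds.mp hi
          rw [cv_nsmul hInd hbS i κ] at h
          apply mem_Ds.mpr
          intro h0
          rw [h0, smul_zero] at h
          exact h rfl
        · have hc1 := hDscard _ hsFS
          rw [hms] at hc1
          rw [hc1, hDscard a₁ ha₁FS]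
      constructor
      · have h4 : istar ∈ Ds I (κ • (m • a₁)) := by rw [hDseq]; exact histar
        have h5 := mem_Ds.mp h4
        rwa [cv_nsmul hInd hbS istar κ] at h5
      · have himem : istar ∈ Ds I (m • (∑ a ∈ F, a)) := by
          rw [hms, hDseq]; exact histar
        have h6 := Multiset.mem_map_of_mem (fun i => eF i (cv I (m • (∑ a ∈ F, a)) i)) himem
        rw [hMfact _ hsFS] at h6
        have hcveq : cv I (m • (∑ a ∈ F, a)) istar = κ • cv I (m • a₁) istar := by
          rw [hms, cv_nsmul hInd hbS istar κ]
        rw [← hcveq]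
        exact h6
    have hmemrange : ∀ κ : ℕ, κ • cv I (m • a₁) istar ∈ Set.range (fun z : ℤ => z • istar) := by
      intro κ
      refine ⟨(κ : ℤ) * rep I (m • a₁) istar, ?_⟩
      show ((κ : ℤ) * rep I (m • a₁) istar) • istar = κ • cv I (m • a₁) istar
      rw [← smul_smul, natCast_zsmul]
      rfl
    have hzero : ∀ x y : ℕ, x < y → y ≤ K →
        x • cv I (m • a₁) istar = y • cv I (m • a₁) istar → False := by
      intro x y hxy hyK hveq
      have h3 : (y - x) • cv I (m • a₁) istar + x • cv I (m • a₁) istar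
          = y • cv I (m • a₁) istar := by
        rw [← add_nsmul]; congr 1; omega
      rw [← hveq] at h3
      have h4 : (y - x) • cv I (m • a₁) istar + x • cv I (m • a₁) istar
          = 0 + x • cv I (m • a₁) istar := by rw [zero_add]; exact h3
      have h5 := add_right_cancel h4
      exact (hfact (y - x) (by omega) (by omega)).1 h5
    have hcard := Finset.card_le_card_of_injOn
      (fun κ => eF istar (κ • cv I (m • a₁) istar))
      (s := Finset.Icc 1 K) (t := M.toFinset)
      (by
        intro κ hκ
        rw [Finset.mem_coe, Finset.mem_Icc] at hκ
        exact Multiset.mem_toFinset.mpr (hfact κ hκ.1 hκ.2).2)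
      (by
        intro κ hκ κ' hκ' heq
        rw [Finset.mem_coe, Finset.mem_Icc] at hκ hκ'
        have hveq : κ • cv I (m • a₁) istar = κ' • cv I (m • a₁) istar :=
          eF_injOn istar (hmemrange κ) (hmemrange κ') heq
        rcases Nat.lt_trichotomy κ κ' with h | h | h
        · exact absurd (hzero κ κ' h hκ'.2 hveq) (by simp)
        · exact h
        · exact absurd (hzero κ' κ h hκ.2 hveq.symm) (by simp))
    rw [Nat.card_Icc] at hcard
    have h7 := Multiset.toFinset_card_le M
    omega
  have hfinal : Xf.card ≤ BB r := by
    have h1 := Finset.card_le_mul_card_image (f := fun a => m • a) Xf r stepC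
    calc Xf.card ≤ r * (Xf.image fun a => m • a).card := h1
      _ ≤ r * (r + 1) ^ (2 * r) := Nat.mul_le_mul_left r stepB
      _ = BB r := by rw [BB]; ring
  omega
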